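/- arXiv:2401.15300 — 4 statements merged into one kernel-verified Lean document; each statement's English description precedes it below -/
import Mathlib

section
/- In the complete bipartite graph K_{p,q} (p, q ≥ 1) with parts A of size p and B of size q, the resistance distances are: r(u,v) = 2/q for distinct u, v ∈ A; r(u,v) = 2/p for distinct u, v ∈ B; and r(u,v) = (p+q−1)/(pq) for u ∈ A and v ∈ B. -/
open Matrix Polynomial BigOperators

/-- `Ldag` is the Moore–Penrose inverse of `L`: `L Ldag L = L`, `Ldag L Ldag = Ldag`,
and both `L Ldag` and `Ldag L` are symmetric. -/
def IsMoorePenroseInv {V : Type*} [Fintype V] (L Ldag : Matrix V V ℝ) : Prop :=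
  L * Ldag * L = L ∧ Ldag * L * Ldag = Ldag ∧
    (L * Ldag)ᵀ = L * Ldag ∧ (Ldag * L)ᵀ = Ldag * L

/-- The resistance distance between vertices `i` and `j`, computed from the
Moore–Penrose inverse `Ldag` of the Laplacian: `r(i,j) = Ldag i i + Ldag j j - 2 Ldag i j`. -/
def resDist {V : Type*} (Ldag : Matrix V V ℝ) (i j : V) : ℝ :=
  Ldag i i + Ldag j j - 2 * Ldag i j

/-- The resistance distance matrix `R(G)`. -/
def resMatrix {V : Type*} [DecidableEq V] (Ldag : Matrix V V ℝ) : Matrix V V ℝ :=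
  Matrix.of fun i j => if i = j then 0 else resDist Ldag i j

/-- The resistance transmission `RTr(v) = ∑ u, r(u,v)` of a vertex `v`. -/
def resTrans {V : Type*} [Fintype V] (Ldag : Matrix V V ℝ) (v : V) : ℝ :=
  ∑ u, resDist Ldag u v

/-- The resistance Laplacian matrix `R^L = Diag(RTr) - R`. -/
def resLap {V : Type*} [Fintype V] [DecidableEq V] (Ldag : Matrix V V ℝ) : Matrix V V ℝ :=
  Matrix.diagonal (resTrans Ldag) - resMatrix Ldag

/-- The resistance signless Laplacian matrix `R^Q = Diag(RTr) + R`. -/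
def resSignlessLap {V : Type*} [Fintype V] [DecidableEq V] (Ldag : Matrix V V ℝ) :
    Matrix V V ℝ :=
  Matrix.diagonal (resTrans Ldag) + resMatrix Ldag

instance {V W : Type*} : DecidableRel (completeBipartiteGraph V W).Adj := fun v w => by
  simp only [completeBipartiteGraph_adj]
  infer_instance

section aux
variable {V : Type*} [Fintype V] [DecidableEq V]

lemma mp_unique (L M N : Matrix V V ℝ) (hM : IsMoorePenroseInv L M)
    (hN : IsMoorePenroseInv L N) : M = N := by
  obtain ⟨hM1, hM2, hM3, hM4⟩ := hM
  obtain ⟨hN1, hN2, hN3, hN4⟩ := hN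
  have h1 : L * M = L * N := by
    calc L * M = (L * N * L) * M := by rw [hN1]
    _ = (L * N) * (L * M) := by noncomm_ring
    _ = (L * N)ᵀ * (L * M)ᵀ := by rw [hN3, hM3]
    _ = ((L * M) * (L * N))ᵀ := (Matrix.transpose_mul _ _).symm
    _ = (L * N)ᵀ := by rw [← mul_assoc, hM1]
    _ = L * N := hN3
  have h2 : M * L = N * L := by
    calc M * L = M * (L * N * L) := by rw [hN1]
    _ = (M * L) * (N * L) := by noncomm_ring
    _ = (M * L)ᵀ * (N * L)ᵀ := by rw [hM4, hN4]
    _ = ((N * L) * (M * L))ᵀ := (Matrix.transpose_mul _ _).symm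
    _ = (N * L)ᵀ := by rw [mul_assoc, ← mul_assoc L M L, hM1]
    _ = N * L := hN4
  calc M = M * L * M := hM2.symm
  _ = N * L * M := by rw [h2]
  _ = N * (L * M) := mul_assoc _ _ _
  _ = N * (L * N) := by rw [h1]
  _ = N * L * N := (mul_assoc _ _ _).symm
  _ = N := hN2

lemma mp_symm (L M : Matrix V V ℝ) (hL : Lᵀ = L) (hM : IsMoorePenroseInv L M) :
    Mᵀ = M := by
  obtain ⟨h1, h2, h3, h4⟩ := hM
  refine mp_unique L Mᵀ M ⟨?_, ?_, ?_, ?_⟩ ⟨h1, h2, h3, h4⟩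
  · have h := congrArg Matrix.transpose h1
    rwa [Matrix.transpose_mul, Matrix.transpose_mul, hL, ← mul_assoc] at h
  · have h := congrArg Matrix.transpose h2
    rwa [Matrix.transpose_mul, Matrix.transpose_mul, hL, ← mul_assoc] at h
  · have key : L * Mᵀ = M * L := by
      calc L * Mᵀ = (M * Lᵀ)ᵀ := by rw [Matrix.transpose_mul, Matrix.transpose_transpose]
      _ = (M * L)ᵀ := by rw [hL]
      _ = M * L := h4
    rw [key]; exact h4
  · have key : Mᵀ * L = L * M := by
      calc Mᵀ * L = (Lᵀ * M)ᵀ := by rw [Matrix.transpose_mul, Matrix.transpose_transpose]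
      _ = (L * M)ᵀ := by rw [hL]
      _ = L * M := h3
    rw [key]; exact h3

lemma quad (L M : Matrix V V ℝ) (hL : Lᵀ = L) (h1 : L * M * L = L)
    (x w : V → ℝ) (hx : L *ᵥ x = w) : w ⬝ᵥ M *ᵥ w = x ⬝ᵥ w := by
  have hw : w = x ᵥ* L := by rw [← hx]; conv_lhs => rw [← hL]; rw [Matrix.mulVec_transpose]
  calc w ⬝ᵥ M *ᵥ w = (x ᵥ* L) ⬝ᵥ M *ᵥ w := by rw [← hw]
  _ = ((x ᵥ* L) ᵥ* M) ⬝ᵥ w := Matrix.dotProduct_mulVec _ _ _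
  _ = (x ᵥ* (L * M)) ⬝ᵥ w := by rw [Matrix.vecMul_vecMul]
  _ = (x ᵥ* (L * M)) ⬝ᵥ (L *ᵥ x) := by rw [hx]
  _ = ((x ᵥ* (L * M)) ᵥ* L) ⬝ᵥ x := Matrix.dotProduct_mulVec _ _ _
  _ = (x ᵥ* (L * M * L)) ⬝ᵥ x := by rw [Matrix.vecMul_vecMul]
  _ = (x ᵥ* L) ⬝ᵥ x := by rw [h1]
  _ = x ⬝ᵥ (L *ᵥ x) := (Matrix.dotProduct_mulVec _ _ _).symm
  _ = x ⬝ᵥ w := by rw [hx]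

lemma sum_pairf (i j : V) (hij : i ≠ j) (f g : V → ℝ) :
    ∑ k, (if k = i then f k else if k = j then g k else 0) = f i + g j := by
  have h : ∀ k, (if k = i then f k else if k = j then g k else 0)
      = (if k = i then f k else 0) + (if k = j then g k else 0) := by
    intro k
    by_cases h1 : k = i
    · subst h1; simp [hij]
    · simp [h1]
  simp_rw [h]
  rw [Finset.sum_add_distrib]
  simp

lemma dot_pair (i j : V) (hij : i ≠ j) (f : V → ℝ) :
    f ⬝ᵥ (fun k => if k = i then (1:ℝ) else if k = j then -1 else 0) = f i - f j := by
  have : ∀ k, f k * (if k = i then (1:ℝ) else if k = j then -1 else 0)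
      = (if k = i then f k else if k = j then -f k else 0) := by
    intro k; by_cases h1 : k = i <;> by_cases h2 : k = j <;> simp [h1, h2]
  calc f ⬝ᵥ _ = ∑ k, (if k = i then f k else if k = j then -f k else 0) := by
        simp only [dotProduct, this]
  _ = f i + -f j := sum_pairf i j hij f (fun k => -f k)
  _ = f i - f j := by ring

lemma resDist_eq (L Ld : Matrix V V ℝ) (hL : Lᵀ = L)
    (hpen : IsMoorePenroseInv L Ld) (i j : V) (hij : i ≠ j) (x : V → ℝ)
    (hx : L *ᵥ x = fun k => if k = i then 1 else if k = j then -1 else 0) :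
    resDist Ld i j = x i - x j := by
  have hsd := mp_symm L Ld hL hpen
  set w : V → ℝ := fun k => if k = i then 1 else if k = j then -1 else 0 with hw
  have hq := quad L Ld hL hpen.1 x w hx
  have hji : Ld j i = Ld i j := by
    have := congrFun (congrFun hsd i) j
    simpa [Matrix.transpose_apply] using this
  have hleft : w ⬝ᵥ Ld *ᵥ w = resDist Ld i j := by
    rw [dotProduct_comm, dot_pair i j hij]
    have hgi : (Ld *ᵥ w) i = Ld i i - Ld i j := by
      show Ld i ⬝ᵥ w = _
      rw [hw, dot_pair i j hij]
    have hgj : (Ld *ᵥ w) j = Ld j i - Ld j j := by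
      show Ld j ⬝ᵥ w = _
      rw [hw, dot_pair i j hij]
    rw [hgi, hgj, hji, resDist]; ring
  rw [← hleft, hq, dot_pair i j hij x]

lemma sum_ite_const (u : V) (c d : ℝ) :
    ∑ a, (if a = u then c else d) = (c - d) + (Fintype.card V : ℝ) * d := by
  have h : ∀ a, (if a = u then c else d) = (if a = u then c - d else 0) + d := by
    intro a; by_cases h1 : a = u <;> simp [h1]
  simp_rw [h]
  rw [Finset.sum_add_distrib]
  simp [mul_comm]

end aux

lemma deg_inl (p q : ℕ) (a : Fin p) :
    (completeBipartiteGraph (Fin p) (Fin q)).degree (Sum.inl a) = q := by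
  rw [SimpleGraph.degree, SimpleGraph.neighborFinset_eq_filter, Finset.card_filter,
    Fintype.sum_sum_type]
  simp

lemma deg_inr (p q : ℕ) (b : Fin q) :
    (completeBipartiteGraph (Fin p) (Fin q)).degree (Sum.inr b) = p := by
  rw [SimpleGraph.degree, SimpleGraph.neighborFinset_eq_filter, Finset.card_filter,
    Fintype.sum_sum_type]
  simp

lemma nsum_inl (p q : ℕ) (a : Fin p) (f : Fin p ⊕ Fin q → ℝ) :
    ∑ u ∈ (completeBipartiteGraph (Fin p) (Fin q)).neighborFinset (Sum.inl a), f u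
      = ∑ b : Fin q, f (Sum.inr b) := by
  rw [SimpleGraph.neighborFinset_eq_filter, Finset.sum_filter, Fintype.sum_sum_type]
  simp

lemma nsum_inr (p q : ℕ) (b : Fin q) (f : Fin p ⊕ Fin q → ℝ) :
    ∑ u ∈ (completeBipartiteGraph (Fin p) (Fin q)).neighborFinset (Sum.inr b), f u
      = ∑ a : Fin p, f (Sum.inl a) := by
  rw [SimpleGraph.neighborFinset_eq_filter, Finset.sum_filter, Fintype.sum_sum_type]
  simp
theorem resDist_completeBipartite (p q : ℕ) (hp : 1 ≤ p) (hq : 1 ≤ q)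
    (Ldag : Matrix (Fin p ⊕ Fin q) (Fin p ⊕ Fin q) ℝ)
    (hpen : IsMoorePenroseInv ((completeBipartiteGraph (Fin p) (Fin q)).lapMatrix ℝ) Ldag) :
    (∀ u v : Fin p, u ≠ v → resDist Ldag (Sum.inl u) (Sum.inl v) = 2 / q) ∧
    (∀ u v : Fin q, u ≠ v → resDist Ldag (Sum.inr u) (Sum.inr v) = 2 / p) ∧
    (∀ (u : Fin p) (v : Fin q),
      resDist Ldag (Sum.inl u) (Sum.inr v) = ((p : ℝ) + q - 1) / (p * q)) := by
  set G := completeBipartiteGraph (Fin p) (Fin q) with hG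
  set L := G.lapMatrix ℝ with hL
  have hLsym : Lᵀ = L := G.isSymm_lapMatrix (R := ℝ)
  have hp0 : (p : ℝ) ≠ 0 := by positivity
  have hq0 : (q : ℝ) ≠ 0 := by positivity
  refine ⟨?_, ?_, ?_⟩
  · intro u v huv
    set x : Fin p ⊕ Fin q → ℝ := fun k =>
      (1 / q) * (if k = Sum.inl u then 1 else if k = Sum.inl v then -1 else 0) with hxdef
    have hij : (Sum.inl u : Fin p ⊕ Fin q) ≠ Sum.inl v := by simp [huv]
    have hx : L *ᵥ x = fun k =>
        if k = Sum.inl u then (1:ℝ) else if k = Sum.inl v then -1 else 0 := by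
      funext z
      rw [hL, SimpleGraph.lapMatrix_mulVec_apply]
      cases z with
      | inl a =>
        rw [deg_inl, nsum_inl]
        simp only [hxdef]
        by_cases h1 : a = u
        · subst h1
          simp [Sum.inl_injective.ne huv]
          field_simp
        · by_cases h2 : a = v
          · subst h2
            simp [h1]
            field_simp
          · simp [h1, h2]
      | inr b =>
        rw [deg_inr, nsum_inr]
        simp only [hxdef]
        have hsum : ∑ a : Fin p,
            (1 / (q:ℝ)) * (if (Sum.inl a : Fin p ⊕ Fin q) = Sum.inl u then (1:ℝ)
              else if (Sum.inl a : Fin p ⊕ Fin q) = Sum.inl v then -1 else 0) = 0 := by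
          rw [← Finset.mul_sum]
          simp only [Sum.inl.injEq]
          rw [sum_pairf u v huv (fun _ => (1:ℝ)) (fun _ => (-1:ℝ))]
          ring
        rw [hsum]
        simp
    rw [resDist_eq L Ldag hLsym hpen _ _ hij x hx]
    have e1 : x (Sum.inl u) = 1 / q := by simp [hxdef]
    have e2 : x (Sum.inl v) = -(1 / q) := by
      simp only [hxdef]
      rw [if_neg (show Sum.inl v ≠ Sum.inl u from by simp [Ne.symm huv])]
      simp
    rw [e1, e2]
    field_simp
    norm_num
  · intro u v huv
    set x : Fin p ⊕ Fin q → ℝ := fun k =>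
      (1 / p) * (if k = Sum.inr u then 1 else if k = Sum.inr v then -1 else 0) with hxdef
    have hij : (Sum.inr u : Fin p ⊕ Fin q) ≠ Sum.inr v := by simp [huv]
    have hx : L *ᵥ x = fun k =>
        if k = Sum.inr u then (1:ℝ) else if k = Sum.inr v then -1 else 0 := by
      funext z
      rw [hL, SimpleGraph.lapMatrix_mulVec_apply]
      cases z with
      | inr b =>
        rw [deg_inr, nsum_inr]
        simp only [hxdef]
        by_cases h1 : b = u
        · subst h1
          simp [Sum.inr_injective.ne huv]
          field_simp
        · by_cases h2 : b = v
          · subst h2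
            simp [h1]
            field_simp
          · simp [h1, h2]
      | inl a =>
        rw [deg_inl, nsum_inl]
        simp only [hxdef]
        have hsum : ∑ b : Fin q,
            (1 / (p:ℝ)) * (if (Sum.inr b : Fin p ⊕ Fin q) = Sum.inr u then (1:ℝ)
              else if (Sum.inr b : Fin p ⊕ Fin q) = Sum.inr v then -1 else 0) = 0 := by
          rw [← Finset.mul_sum]
          simp only [Sum.inr.injEq]
          rw [sum_pairf u v huv (fun _ => (1:ℝ)) (fun _ => (-1:ℝ))]
          ring
        rw [hsum]
        simp
    rw [resDist_eq L Ldag hLsym hpen _ _ hij x hx]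
    have e1 : x (Sum.inr u) = 1 / p := by simp [hxdef]
    have e2 : x (Sum.inr v) = -(1 / p) := by
      simp only [hxdef]
      rw [if_neg (show Sum.inr v ≠ Sum.inr u from by simp [Ne.symm huv])]
      simp
    rw [e1, e2]
    field_simp
    norm_num
  · intro u v
    set x : Fin p ⊕ Fin q → ℝ := Sum.elim
      (fun a => if a = u then ((p:ℝ) - 1) / (p * q) else -1 / (p * q))
      (fun b => if b = v then -1 / (p:ℝ) else 0) with hxdef
    have hij : (Sum.inl u : Fin p ⊕ Fin q) ≠ Sum.inr v := by simp
    have hx : L *ᵥ x = fun k =>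
        if k = Sum.inl u then (1:ℝ) else if k = Sum.inr v then -1 else 0 := by
      funext z
      rw [hL, SimpleGraph.lapMatrix_mulVec_apply]
      cases z with
      | inl a =>
        rw [deg_inl, nsum_inl]
        simp only [hxdef, Sum.elim_inl, Sum.elim_inr]
        have hsum : ∑ b : Fin q, (if b = v then -1 / (p:ℝ) else 0) = -1 / p := by
          simp
        rw [hsum]
        by_cases h1 : a = u
        · subst h1; simp; field_simp; ring
        · simp [h1]; field_simp; ring
      | inr b =>
        rw [deg_inr, nsum_inr]
        simp only [hxdef, Sum.elim_inl, Sum.elim_inr]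
        have hsum : ∑ a : Fin p,
            (if a = u then ((p:ℝ) - 1) / (p * q) else -1 / (p * q)) = 0 := by
          rw [sum_ite_const]
          simp only [Fintype.card_fin]
          field_simp
          ring
        rw [hsum]
        by_cases h1 : b = v
        · subst h1; simp; field_simp
        · simp [h1]
    rw [resDist_eq L Ldag hLsym hpen _ _ hij x hx]
    simp [hxdef]
    field_simp
    ring
end

section
/- For the complete bipartite graph K_{p,q} (p, q ≥ 1), the eigenvalues of the resistance Laplacian R^L(K_{p,q}), counted with multiplicity, are: 0 with multiplicity 1; ((p+q)² − p − q)/(pq) with multiplicity 1; 2p/q + (p+q−1)/p with multiplicity p−1; and 2q/p + (p+q−1)/q with multiplicity q−1. -/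
open Matrix Polynomial BigOperators

/-! Auxiliary development -/

lemma mp_unique_s6 {V : Type*} [Fintype V] {L X Y : Matrix V V ℝ}
    (hX : IsMoorePenroseInv L X) (hY : IsMoorePenroseInv L Y) : X = Y := by
  obtain ⟨hX1, hX2, hX3, hX4⟩ := hX
  obtain ⟨hY1, hY2, hY3, hY4⟩ := hY
  have h1 : X = X * L * Y := by
    calc X = X * (L * X) := by rw [← Matrix.mul_assoc, hX2]
    _ = X * (Xᵀ * Lᵀ) := by rw [← Matrix.transpose_mul, hX3]
    _ = X * (Xᵀ * (L * Y * L)ᵀ) := by rw [hY1]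
    _ = X * ((L * X)ᵀ * (L * Y)ᵀ) := by
        simp only [Matrix.transpose_mul, Matrix.mul_assoc]
    _ = X * (L * X * (L * Y)) := by rw [hX3, hY3]
    _ = X * L * X * (L * Y) := by simp only [Matrix.mul_assoc]
    _ = X * L * Y := by rw [hX2, Matrix.mul_assoc]
  have h2 : Y = X * L * Y := by
    calc Y = Y * L * Y := hY2.symm
    _ = (Lᵀ * Yᵀ) * Y := by rw [← Matrix.transpose_mul, hY4]
    _ = ((L * X * L)ᵀ * Yᵀ) * Y := by rw [hX1]
    _ = ((X * L)ᵀ * (Y * L)ᵀ) * Y := by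
        simp only [Matrix.transpose_mul, Matrix.mul_assoc]
    _ = (X * L * (Y * L)) * Y := by rw [hX4, hY4]
    _ = X * L * (Y * L * Y) := by simp only [Matrix.mul_assoc]
    _ = X * L * Y := by rw [hY2]
  rw [h1, ← h2]

section Bip

variable (p q : ℕ)

/-- explicit Laplacian of `K_{p,q}` -/
noncomputable def LB : Matrix (Fin p ⊕ Fin q) (Fin p ⊕ Fin q) ℝ :=
  Matrix.of fun i j =>
    match i, j with
    | Sum.inl a, Sum.inl a' => if a = a' then (q : ℝ) else 0
    | Sum.inl _, Sum.inr _ => -1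
    | Sum.inr _, Sum.inl _ => -1
    | Sum.inr b, Sum.inr b' => if b = b' then (p : ℝ) else 0

/-- explicit Moore-Penrose inverse of the Laplacian of `K_{p,q}` -/
noncomputable def Ldag0 : Matrix (Fin p ⊕ Fin q) (Fin p ⊕ Fin q) ℝ :=
  Matrix.of fun i j =>
    match i, j with
    | Sum.inl a, Sum.inl a' =>
        (if a = a' then (q : ℝ)⁻¹ else 0) - 1 / (q * (p + q)) - 1 / ((p : ℝ) + q) ^ 2
    | Sum.inl _, Sum.inr _ => -(1 / ((p : ℝ) + q) ^ 2)
    | Sum.inr _, Sum.inl _ => -(1 / ((p : ℝ) + q) ^ 2)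
    | Sum.inr b, Sum.inr b' =>
        (if b = b' then (p : ℝ)⁻¹ else 0) - 1 / (p * (p + q)) - 1 / ((p : ℝ) + q) ^ 2

noncomputable def Jmat : Matrix (Fin p ⊕ Fin q) (Fin p ⊕ Fin q) ℝ := Matrix.of fun _ _ => 1

noncomputable def dl : Fin p ⊕ Fin q → ℝ :=
  Sum.elim (fun _ => 2 * (p : ℝ) / q + ((p : ℝ) + q - 1) / p)
    (fun _ => 2 * (q : ℝ) / p + ((p : ℝ) + q - 1) / q)

noncomputable def Umat : Matrix (Fin p ⊕ Fin q) (Fin 2) ℝ :=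
  Matrix.of fun i k =>
    match i with
    | Sum.inl _ => if k = 0 then 1 else 0
    | Sum.inr _ => if k = 0 then 0 else 1

noncomputable def Vmat : Matrix (Fin 2) (Fin p ⊕ Fin q) ℝ :=
  Matrix.of fun k j =>
    match j with
    | Sum.inl _ => if k = 0 then 2 / (q : ℝ) else ((p : ℝ) + q - 1) / (p * q)
    | Sum.inr _ => if k = 0 then ((p : ℝ) + q - 1) / (p * q) else 2 / (p : ℝ)

variable {p q}

lemma lap_eq_LB : (completeBipartiteGraph (Fin p) (Fin q)).lapMatrix ℝ = LB p q := by
  have hdl : ∀ a : Fin p, (completeBipartiteGraph (Fin p) (Fin q)).degree (Sum.inl a) = q := by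
    intro a
    rw [SimpleGraph.degree]
    have : (completeBipartiteGraph (Fin p) (Fin q)).neighborFinset (Sum.inl a)
        = Finset.univ.map ⟨Sum.inr, Sum.inr_injective⟩ := by
      ext w; cases w <;> simp [SimpleGraph.mem_neighborFinset]
    rw [this]; simp
  have hdr : ∀ b : Fin q, (completeBipartiteGraph (Fin p) (Fin q)).degree (Sum.inr b) = p := by
    intro b
    rw [SimpleGraph.degree]
    have : (completeBipartiteGraph (Fin p) (Fin q)).neighborFinset (Sum.inr b)
        = Finset.univ.map ⟨Sum.inl, Sum.inl_injective⟩ := by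
      ext w; cases w <;> simp [SimpleGraph.mem_neighborFinset]
    rw [this]; simp
  ext i j
  rcases i with a | b <;> rcases j with a' | b' <;>
    simp [SimpleGraph.lapMatrix, SimpleGraph.degMatrix, SimpleGraph.adjMatrix, LB, hdl, hdr] <;>
    aesop

lemma LB_symm : (LB p q)ᵀ = LB p q := by
  ext i j
  rcases i with a | b <;> rcases j with a' | b' <;> simp [LB, eq_comm]

lemma Ldag0_symm : (Ldag0 p q)ᵀ = Ldag0 p q := by
  ext i j
  rcases i with a | b <;> rcases j with a' | b' <;> simp [Ldag0, eq_comm]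

lemma Jmat_symm : (Jmat p q)ᵀ = Jmat p q := by
  ext i j; rcases i with a | b <;> rcases j with a' | b' <;> simp [Jmat]

lemma hLD (hp : 1 ≤ p) (hq : 1 ≤ q) :
    LB p q * Ldag0 p q = 1 - (((p : ℝ) + q))⁻¹ • Jmat p q := by
  have hp0 : (p : ℝ) ≠ 0 := Nat.cast_ne_zero.2 (by omega)
  have hq0 : (q : ℝ) ≠ 0 := Nat.cast_ne_zero.2 (by omega)
  have hn0 : (p : ℝ) + q ≠ 0 := by positivity
  ext i j
  rcases i with a | b <;> rcases j with a' | b' <;>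
    simp [Matrix.mul_apply, Fintype.sum_sum_type, LB, Ldag0, Jmat, Matrix.one_apply,
      Finset.sum_ite_eq, Finset.sum_ite_eq', ite_mul, mul_sub, Finset.sum_add_distrib,
      Finset.sum_sub_distrib] <;>
    (try split_ifs) <;> (try field_simp) <;> (try ring)

lemma hJL (hp : 1 ≤ p) (hq : 1 ≤ q) : Jmat p q * LB p q = 0 := by
  ext i j
  rcases i with a | b <;> rcases j with a' | b' <;>
    simp [Matrix.mul_apply, Fintype.sum_sum_type, LB, Jmat, Finset.sum_ite_eq,
      Finset.sum_ite_eq', ite_mul, Finset.sum_sub_distrib, Finset.sum_add_distrib] <;>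
    (try field_simp) <;> (try ring)

lemma hDJ (hp : 1 ≤ p) (hq : 1 ≤ q) : Ldag0 p q * Jmat p q = 0 := by
  have hp0 : (p : ℝ) ≠ 0 := Nat.cast_ne_zero.2 (by omega)
  have hq0 : (q : ℝ) ≠ 0 := Nat.cast_ne_zero.2 (by omega)
  have hn0 : (p : ℝ) + q ≠ 0 := by positivity
  ext i j
  rcases i with a | b <;> rcases j with a' | b' <;>
    simp [Matrix.mul_apply, Fintype.sum_sum_type, LB, Ldag0, Jmat, Finset.sum_ite_eq,
      Finset.sum_ite_eq', ite_mul, Finset.sum_sub_distrib, Finset.sum_add_distrib] <;>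
    (try field_simp) <;> (try ring)

lemma hDL (hp : 1 ≤ p) (hq : 1 ≤ q) :
    Ldag0 p q * LB p q = 1 - (((p : ℝ) + q))⁻¹ • Jmat p q := by
  have := congrArg Matrix.transpose (hLD hp hq)
  rw [Matrix.transpose_mul, LB_symm, Ldag0_symm, Matrix.transpose_sub, Matrix.transpose_one,
    Matrix.transpose_smul, Jmat_symm] at this
  exact this

lemma hJD (hp : 1 ≤ p) (hq : 1 ≤ q) : Jmat p q * Ldag0 p q = 0 := by
  have := congrArg Matrix.transpose (hDJ hp hq)
  rw [Matrix.transpose_mul, Ldag0_symm, Jmat_symm, Matrix.transpose_zero] at this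
  exact this

lemma mp_Ldag0 (hp : 1 ≤ p) (hq : 1 ≤ q) : IsMoorePenroseInv (LB p q) (Ldag0 p q) := by
  refine ⟨?_, ?_, ?_, ?_⟩
  · rw [hLD hp hq, Matrix.sub_mul, Matrix.one_mul, Matrix.smul_mul, hJL hp hq, smul_zero,
      sub_zero]
  · rw [hDL hp hq, Matrix.sub_mul, Matrix.one_mul, Matrix.smul_mul, hJD hp hq, smul_zero,
      sub_zero]
  · rw [hLD hp hq, Matrix.transpose_sub, Matrix.transpose_one, Matrix.transpose_smul, Jmat_symm]
  · rw [hDL hp hq, Matrix.transpose_sub, Matrix.transpose_one, Matrix.transpose_smul, Jmat_symm]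

set_option maxHeartbeats 2000000 in
lemma Mform (hp : 1 ≤ p) (hq : 1 ≤ q) :
    resLap (Ldag0 p q) = Matrix.diagonal (dl p q) - Umat p q * Vmat p q := by
  have hp0 : (p : ℝ) ≠ 0 := Nat.cast_ne_zero.2 (by omega)
  have hq0 : (q : ℝ) ≠ 0 := Nat.cast_ne_zero.2 (by omega)
  have hn0 : (p : ℝ) + q ≠ 0 := by positivity
  ext i j
  rcases i with a | b <;> rcases j with a' | b' <;>
    simp [resLap, resMatrix, resTrans, resDist, Ldag0, dl, Umat, Vmat, Matrix.mul_apply,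
      Matrix.diagonal_apply, Fin.sum_univ_two, Fintype.sum_sum_type, mul_ite, ite_mul,
      mul_zero, zero_mul, mul_sub, sub_mul, mul_add, add_mul, Finset.sum_ite_eq,
      Finset.sum_ite_eq', Finset.sum_add_distrib, Finset.sum_sub_distrib,
      Finset.sum_const, Finset.card_univ, Fintype.card_fin, nsmul_eq_mul] <;>
    (try split_ifs) <;> (try field_simp) <;> (try ring)

lemma charpoly_structured (dlf : Fin p ⊕ Fin q → ℝ) (U : Matrix (Fin p ⊕ Fin q) (Fin 2) ℝ)
    (V : Matrix (Fin 2) (Fin p ⊕ Fin q) ℝ) :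
    (Matrix.diagonal dlf - U * V).charpoly
      = Matrix.det (Matrix.diagonal (fun i => (X : ℝ[X]) - C (dlf i))
          + (U.map C) * (V.map C)) := by
  rw [Matrix.charpoly]
  congr 1
  ext i j
  by_cases h : i = j <;>
    simp [Matrix.charmatrix_apply, h, Matrix.diagonal_apply, Matrix.map_apply, Matrix.mul_apply,
      map_sum, Matrix.sub_apply] <;> ring

lemma poly_key (s t : ℝ) : (X - C s) * (X - C t) - C (s * t) = X * (X - C (s + t)) := by
  rw [_root_.map_mul, _root_.map_add]; ring

lemma det_comp {K : Type*} [Field K] (hp : 1 ≤ p) (hq : 1 ≤ q)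
    (xA xB α β γ w z : K) (hxA : xA ≠ 0) (hxB : xB ≠ 0)
    (hsplit : w * z = (xA + p * α) * (xB + q * β) - (p * q) * γ ^ 2) :
    xA ^ p * xB ^ q *
      ((1 + p * (α * xA⁻¹)) * (1 + q * (β * xB⁻¹)) - q * (γ * xB⁻¹) * (p * (γ * xA⁻¹)))
      = w * z * xA ^ (p - 1) * xB ^ (q - 1) := by
  obtain ⟨p', rfl⟩ : ∃ p', p = p' + 1 := ⟨p - 1, by omega⟩
  obtain ⟨q', rfl⟩ : ∃ q', q = q' + 1 := ⟨q - 1, by omega⟩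
  simp only [Nat.add_sub_cancel]
  rw [hsplit]
  field_simp
  ring

end Bip

set_option maxHeartbeats 2000000 in
theorem resLap_completeBipartite_eigenvalues (p q : ℕ) (hp : 1 ≤ p) (hq : 1 ≤ q)
    (Ldag : Matrix (Fin p ⊕ Fin q) (Fin p ⊕ Fin q) ℝ)
    (hpen : IsMoorePenroseInv ((completeBipartiteGraph (Fin p) (Fin q)).lapMatrix ℝ) Ldag) :
    (resLap Ldag).charpoly =
      X * (X - C ((((p : ℝ) + q) ^ 2 - p - q) / (p * q))) *
        (X - C (2 * (p : ℝ) / q + ((p : ℝ) + q - 1) / p)) ^ (p - 1) *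
        (X - C (2 * (q : ℝ) / p + ((p : ℝ) + q - 1) / q)) ^ (q - 1) := by
  have hp0 : (p : ℝ) ≠ 0 := Nat.cast_ne_zero.2 (by omega)
  have hq0 : (q : ℝ) ≠ 0 := Nat.cast_ne_zero.2 (by omega)
  -- identify Ldag with the explicit Moore-Penrose inverse
  have hL0 : Ldag = Ldag0 p q := by
    have h2 := mp_Ldag0 hp hq
    rw [← lap_eq_LB] at h2
    exact mp_unique_s6 hpen h2
  rw [hL0, Mform hp hq, charpoly_structured]
  -- names for the eigenvalues
  have hkey : (X : ℝ[X]) * (X - C ((((p : ℝ) + q) ^ 2 - p - q) / (p * q)))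
      = (X - C (2 * (p : ℝ) / q + ((p : ℝ) + q - 1) / p) + C ((p : ℝ) * (2 / q)))
        * (X - C (2 * (q : ℝ) / p + ((p : ℝ) + q - 1) / q) + C ((q : ℝ) * (2 / p)))
        - C ((p : ℝ) * q * (((p : ℝ) + q - 1) / (p * q)) ^ 2) := by
    set s1 : ℝ := ((p : ℝ) + q - 1) / p with hs1
    set s2 : ℝ := ((p : ℝ) + q - 1) / q with hs2
    have r1 : 2 * (p : ℝ) / q + ((p : ℝ) + q - 1) / p = s1 + (p : ℝ) * (2 / q) := by
      rw [hs1]; field_simp; ring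
    have r2 : 2 * (q : ℝ) / p + ((p : ℝ) + q - 1) / q = s2 + (q : ℝ) * (2 / p) := by
      rw [hs2]; field_simp; ring
    have r3 : (p : ℝ) * q * (((p : ℝ) + q - 1) / (p * q)) ^ 2 = s1 * s2 := by
      rw [hs1, hs2]; field_simp
    have r4 : (((p : ℝ) + q) ^ 2 - p - q) / (p * q) = s1 + s2 := by
      rw [hs1, hs2]; field_simp; ring
    rw [r1, r2, r3, r4, ← poly_key s1 s2, _root_.map_add, _root_.map_add]
    ring
  -- move to the fraction field
  set K := FractionRing ℝ[X] with hK
  let φ : ℝ[X] →+* K := algebraMap ℝ[X] K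
  have hinj : Function.Injective φ := IsFractionRing.injective _ _
  apply hinj
  rw [RingHom.map_det]
  set lamA : ℝ := 2 * (p : ℝ) / q + ((p : ℝ) + q - 1) / p with hlamA
  set lamB : ℝ := 2 * (q : ℝ) / p + ((p : ℝ) + q - 1) / q with hlamB
  set μ : ℝ := (((p : ℝ) + q) ^ 2 - p - q) / (p * q) with hμ
  set xA : K := φ (X - C lamA) with hxAdef
  set xB : K := φ (X - C lamB) with hxBdef
  have hxA : xA ≠ 0 := by
    rw [hxAdef, map_ne_zero_iff φ hinj]
    exact Polynomial.X_sub_C_ne_zero lamA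
  have hxB : xB ≠ 0 := by
    rw [hxBdef, map_ne_zero_iff φ hinj]
    exact Polynomial.X_sub_C_ne_zero lamB
  set dK : Fin p ⊕ Fin q → K := fun i => φ (X - C (dl p q i)) with hdK
  have hdKl : ∀ a : Fin p, dK (Sum.inl a) = xA := fun a => rfl
  have hdKr : ∀ b : Fin q, dK (Sum.inr b) = xB := fun b => rfl
  have hdKne : ∀ i, dK i ≠ 0 := by
    rintro (a | b)
    · rw [hdKl]; exact hxA
    · rw [hdKr]; exact hxB
  set UK : Matrix (Fin p ⊕ Fin q) (Fin 2) K := (Umat p q).map (fun x => φ (C x)) with hUK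
  set VK : Matrix (Fin 2) (Fin p ⊕ Fin q) K := (Vmat p q).map (fun x => φ (C x)) with hVK
  have hmap : ((Matrix.diagonal (fun i => (X : ℝ[X]) - C (dl p q i))
        + ((Umat p q).map C) * ((Vmat p q).map C)).map φ)
      = Matrix.diagonal dK + UK * VK := by
    ext i j
    by_cases h : i = j <;>
      simp [h, Matrix.map_apply, Matrix.add_apply, Matrix.mul_apply, Matrix.diagonal_apply,
        map_sum, hdK, hUK, hVK]
  rw [RingHom.mapMatrix_apply, hmap]
  -- factor out the diagonal
  have hfact : Matrix.diagonal dK + UK * VK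
      = Matrix.diagonal dK * (1 + (Matrix.diagonal (fun i => (dK i)⁻¹) * UK) * VK) := by
    rw [Matrix.mul_add, Matrix.mul_one, ← Matrix.mul_assoc, ← Matrix.mul_assoc,
      Matrix.diagonal_mul_diagonal]
    have h1 : (fun i => dK i * (dK i)⁻¹) = fun _ => (1 : K) :=
      funext fun i => mul_inv_cancel₀ (hdKne i)
    rw [h1, Matrix.diagonal_one, Matrix.one_mul]
  rw [hfact, Matrix.det_mul, Matrix.det_diagonal, Matrix.det_one_add_mul_comm]
  -- the 2x2 determinant
  have h10 : (1 : Fin 2) ≠ 0 := by decide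
  have h01 : (0 : Fin 2) ≠ 1 := by decide
  have hW00 : (VK * (Matrix.diagonal (fun i => (dK i)⁻¹) * UK)) 0 0
      = (p : K) * (φ (C (2 / (q : ℝ))) * xA⁻¹) := by
    simp only [Matrix.mul_apply, hUK, hVK, Matrix.map_apply, Umat, Vmat,
      Matrix.of_apply, Fintype.sum_sum_type, Matrix.diagonal_apply, Sum.inl.injEq,
      Sum.inr.injEq, reduceCtorEq, eq_self_iff_true, if_true, if_false, h10, h01,
      _root_.map_one, _root_.map_zero, mul_one, mul_zero, one_mul, zero_mul, ite_mul, mul_ite,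
      Finset.sum_ite_eq, Finset.sum_ite_eq', Finset.mem_univ, if_false, add_zero, zero_add,
      Finset.sum_const_zero, Finset.sum_const, Finset.card_univ, Fintype.card_fin,
      nsmul_eq_mul, hdKl, hdKr]
  have hW01 : (VK * (Matrix.diagonal (fun i => (dK i)⁻¹) * UK)) 0 1
      = (q : K) * (φ (C (((p : ℝ) + q - 1) / (p * q))) * xB⁻¹) := by
    simp only [Matrix.mul_apply, hUK, hVK, Matrix.map_apply, Umat, Vmat,
      Matrix.of_apply, Fintype.sum_sum_type, Matrix.diagonal_apply, Sum.inl.injEq,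
      Sum.inr.injEq, reduceCtorEq, eq_self_iff_true, if_true, if_false, h10, h01,
      _root_.map_one, _root_.map_zero, mul_one, mul_zero, one_mul, zero_mul, ite_mul, mul_ite,
      Finset.sum_ite_eq, Finset.sum_ite_eq', Finset.mem_univ, if_false, add_zero, zero_add,
      Finset.sum_const_zero, Finset.sum_const, Finset.card_univ, Fintype.card_fin,
      nsmul_eq_mul, hdKl, hdKr]
  have hW10 : (VK * (Matrix.diagonal (fun i => (dK i)⁻¹) * UK)) 1 0
      = (p : K) * (φ (C (((p : ℝ) + q - 1) / (p * q))) * xA⁻¹) := by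
    simp only [Matrix.mul_apply, hUK, hVK, Matrix.map_apply, Umat, Vmat,
      Matrix.of_apply, Fintype.sum_sum_type, Matrix.diagonal_apply, Sum.inl.injEq,
      Sum.inr.injEq, reduceCtorEq, eq_self_iff_true, if_true, if_false, h10, h01,
      _root_.map_one, _root_.map_zero, mul_one, mul_zero, one_mul, zero_mul, ite_mul, mul_ite,
      Finset.sum_ite_eq, Finset.sum_ite_eq', Finset.mem_univ, if_false, add_zero, zero_add,
      Finset.sum_const_zero, Finset.sum_const, Finset.card_univ, Fintype.card_fin,
      nsmul_eq_mul, hdKl, hdKr]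
  have hW11 : (VK * (Matrix.diagonal (fun i => (dK i)⁻¹) * UK)) 1 1
      = (q : K) * (φ (C (2 / (p : ℝ))) * xB⁻¹) := by
    simp only [Matrix.mul_apply, hUK, hVK, Matrix.map_apply, Umat, Vmat,
      Matrix.of_apply, Fintype.sum_sum_type, Matrix.diagonal_apply, Sum.inl.injEq,
      Sum.inr.injEq, reduceCtorEq, eq_self_iff_true, if_true, if_false, h10, h01,
      _root_.map_one, _root_.map_zero, mul_one, mul_zero, one_mul, zero_mul, ite_mul, mul_ite,
      Finset.sum_ite_eq, Finset.sum_ite_eq', Finset.mem_univ, if_false, add_zero, zero_add,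
      Finset.sum_const_zero, Finset.sum_const, Finset.card_univ, Fintype.card_fin,
      nsmul_eq_mul, hdKl, hdKr]
  have hdet2 : Matrix.det (1 + VK * (Matrix.diagonal (fun i => (dK i)⁻¹) * UK))
      = (1 + (p : K) * (φ (C (2 / (q : ℝ))) * xA⁻¹))
          * (1 + (q : K) * (φ (C (2 / (p : ℝ))) * xB⁻¹))
        - (q : K) * (φ (C (((p : ℝ) + q - 1) / (p * q))) * xB⁻¹)
          * ((p : K) * (φ (C (((p : ℝ) + q - 1) / (p * q))) * xA⁻¹)) := by
    rw [Matrix.det_fin_two]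
    rw [Matrix.add_apply, Matrix.add_apply, Matrix.add_apply, Matrix.add_apply,
      Matrix.one_apply_eq, Matrix.one_apply_eq, Matrix.one_apply_ne h01,
      Matrix.one_apply_ne h10, hW00, hW01, hW10, hW11]
    ring
  have hprod : (∏ i, dK i) = xA ^ p * xB ^ q := by
    rw [Fintype.prod_sum_type]
    simp [hdKl, hdKr]
  rw [hdet2, hprod]
  -- the split identity in K
  have cp : φ (C ((p : ℝ))) = (p : K) := by
    rw [map_natCast (C : ℝ →+* ℝ[X]) p, map_natCast φ p]
  have cq : φ (C ((q : ℝ))) = (q : K) := by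
    rw [map_natCast (C : ℝ →+* ℝ[X]) q, map_natCast φ q]
  have c1 : φ (C ((p : ℝ) * (2 / q))) = (p : K) * φ (C (2 / (q : ℝ))) := by
    rw [Polynomial.C_mul, _root_.map_mul φ, cp]
  have c2 : φ (C ((q : ℝ) * (2 / p))) = (q : K) * φ (C (2 / (p : ℝ))) := by
    rw [Polynomial.C_mul, _root_.map_mul φ, cq]
  have c3 : φ (C ((p : ℝ) * q * (((p : ℝ) + q - 1) / (p * q)) ^ 2))
      = ((p : K) * (q : K)) * φ (C (((p : ℝ) + q - 1) / (p * q))) ^ 2 := by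
    rw [Polynomial.C_mul, Polynomial.C_mul, Polynomial.C_pow, _root_.map_mul φ,
      _root_.map_mul φ, _root_.map_pow φ, cp, cq]
  have hsplit : φ X * φ (X - C μ)
      = (xA + (p : K) * φ (C (2 / (q : ℝ)))) * (xB + (q : K) * φ (C (2 / (p : ℝ))))
        - ((p : K) * (q : K)) * φ (C (((p : ℝ) + q - 1) / (p * q))) ^ 2 := by
    calc φ X * φ (X - C μ) = φ (X * (X - C μ)) := (_root_.map_mul φ _ _).symm
    _ = φ ((X - C lamA + C ((p : ℝ) * (2 / q))) * (X - C lamB + C ((q : ℝ) * (2 / p)))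
          - C ((p : ℝ) * q * (((p : ℝ) + q - 1) / (p * q)) ^ 2)) := by rw [hkey]
    _ = (φ (X - C lamA) + φ (C ((p : ℝ) * (2 / q))))
          * (φ (X - C lamB) + φ (C ((q : ℝ) * (2 / p))))
          - φ (C ((p : ℝ) * q * (((p : ℝ) + q - 1) / (p * q)) ^ 2)) := by
        rw [_root_.map_sub, _root_.map_mul,
          _root_.map_add φ (X - C lamA) (C ((p : ℝ) * (2 / q))),
          _root_.map_add φ (X - C lamB) (C ((q : ℝ) * (2 / p)))]
    _ = (xA + (p : K) * φ (C (2 / (q : ℝ)))) * (xB + (q : K) * φ (C (2 / (p : ℝ))))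
        - ((p : K) * (q : K)) * φ (C (((p : ℝ) + q - 1) / (p * q))) ^ 2 := by
        rw [c1, c2, c3]
  -- finish with map_mul on the RHS and the generic computation
  rw [_root_.map_mul, _root_.map_mul, _root_.map_mul, _root_.map_pow, _root_.map_pow]
  rw [← hxAdef, ← hxBdef]
  have := det_comp (K := K) hp hq xA xB (φ (C (2 / (q : ℝ)))) (φ (C (2 / (p : ℝ))))
    (φ (C (((p : ℝ) + q - 1) / (p * q)))) (φ X) (φ (X - C μ)) hxA hxB hsplit
  rw [← this]
end

section
/- Let G be a connected graph on n ≥ 2 vertices. Then the spectral radius (i.e., the largest eigenvalue) of the resistance Laplacian R^L(G) is at least 2. -/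
open Matrix Polynomial BigOperators

/-- The Moore–Penrose inverse of a symmetric real matrix is symmetric. -/
lemma aux_mp_symm {V : Type*} [Fintype V] {A B : Matrix V V ℝ} (hA : Aᵀ = A)
    (h : IsMoorePenroseInv A B) : Bᵀ = B := by
  obtain ⟨h1, h2, h3, h4⟩ := h
  have g1 : A * Bᵀ * A = A := by
    have h := congrArg Matrix.transpose h1
    simp only [Matrix.transpose_mul, hA] at h
    rw [← Matrix.mul_assoc] at h
    exact h
  have g2 : Bᵀ * A * Bᵀ = Bᵀ := by
    have h := congrArg Matrix.transpose h2
    simp only [Matrix.transpose_mul, hA] at h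
    rw [← Matrix.mul_assoc] at h
    exact h
  have g3 : A * Bᵀ = B * A := by
    calc A * Bᵀ = Aᵀ * Bᵀ := by rw [hA]
      _ = (B * A)ᵀ := (Matrix.transpose_mul B A).symm
      _ = B * A := h4
  have g4 : Bᵀ * A = A * B := by
    calc Bᵀ * A = Bᵀ * Aᵀ := by rw [hA]
      _ = (A * B)ᵀ := (Matrix.transpose_mul A B).symm
      _ = A * B := h3
  have f3 : (A * Bᵀ)ᵀ = A * Bᵀ := by rw [g3, h4, ← g3]
  have f4 : (Bᵀ * A)ᵀ = Bᵀ * A := by rw [g4, h3, ← g4]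
  have hAB : A * B = A * Bᵀ := by
    calc A * B = (A * Bᵀ * A) * B := by rw [g1]
      _ = (A * Bᵀ) * (A * B) := by rw [Matrix.mul_assoc]
      _ = (A * Bᵀ)ᵀ * (A * B)ᵀ := by rw [f3, h3]
      _ = ((A * B) * (A * Bᵀ))ᵀ := (Matrix.transpose_mul _ _).symm
      _ = ((A * B * A) * Bᵀ)ᵀ := by rw [Matrix.mul_assoc (A * B) A Bᵀ]
      _ = (A * Bᵀ)ᵀ := by rw [h1]
      _ = A * Bᵀ := f3
  have hBA : B * A = Bᵀ * A := by
    calc B * A = B * (A * Bᵀ * A) := by rw [g1]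
      _ = (B * (A * Bᵀ)) * A := by simp only [Matrix.mul_assoc]
      _ = (B * A * Bᵀ) * A := by rw [Matrix.mul_assoc B A Bᵀ]
      _ = (B * A) * (Bᵀ * A) := by rw [Matrix.mul_assoc]
      _ = (B * A)ᵀ * (Bᵀ * A)ᵀ := by rw [h4, f4]
      _ = ((Bᵀ * A) * (B * A))ᵀ := (Matrix.transpose_mul _ _).symm
      _ = ((Bᵀ * (A * B)) * A)ᵀ := by
          rw [Matrix.mul_assoc Bᵀ A (B * A), ← Matrix.mul_assoc A B A, ← Matrix.mul_assoc]
      _ = ((Bᵀ * (A * B * A)))ᵀ := by rw [Matrix.mul_assoc Bᵀ (A * B) A]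
      _ = (Bᵀ * A)ᵀ := by rw [h1]
      _ = Bᵀ * A := f4
  calc Bᵀ = Bᵀ * A * Bᵀ := g2.symm
    _ = (B * A) * Bᵀ := by rw [hBA]
    _ = B * (A * Bᵀ) := by rw [Matrix.mul_assoc]
    _ = B * (A * B) := by rw [hAB]
    _ = B * A * B := by rw [Matrix.mul_assoc]
    _ = B := h2

/-- The trace of a hermitian real matrix is the sum of its eigenvalues. -/
lemma aux_trace_eq_sum_eigenvalues {m : ℕ} {A : Matrix (Fin m) (Fin m) ℝ}
    (hA : A.IsHermitian) : A.trace = ∑ i, hA.eigenvalues i := by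
  conv_lhs => rw [hA.spectral_theorem]
  rw [Unitary.conjStarAlgAut_apply]
  rw [Matrix.trace_mul_cycle]
  rw [show (star (hA.eigenvectorUnitary : Matrix (Fin m) (Fin m) ℝ)) *
      (hA.eigenvectorUnitary : Matrix (Fin m) (Fin m) ℝ) = 1 from
    Matrix.mem_unitaryGroup_iff'.mp (hA.eigenvectorUnitary).2]
  simp [Matrix.trace_diagonal]

open scoped MatrixOrder in
/-- A positive semidefinite real matrix is of the form `star B * B`. -/
lemma aux_psd_eq_star_mul_self {m : ℕ} {A : Matrix (Fin m) (Fin m) ℝ} (hA : A.PosSemidef) :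
    ∃ B : Matrix (Fin m) (Fin m) ℝ, A = star B * B :=
  CStarAlgebra.nonneg_iff_eq_star_mul_self.mp hA.nonneg

/-- For symmetric `M`, the quadratic form moves across the dot product. -/
lemma aux_dot_symm {m : ℕ} (M : Matrix (Fin m) (Fin m) ℝ) (hM : Mᵀ = M)
    (x y : Fin m → ℝ) : x ⬝ᵥ (M *ᵥ y) = (M *ᵥ x) ⬝ᵥ y := by
  rw [Matrix.dotProduct_mulVec, ← Matrix.mulVec_transpose, hM]

theorem resLap_spectralRadius_ge_two {n : ℕ} (hn : 2 ≤ n)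
    (G : SimpleGraph (Fin n)) [DecidableRel G.Adj] (hG : G.Connected)
    (Ldag : Matrix (Fin n) (Fin n) ℝ)
    (hpen : IsMoorePenroseInv (G.lapMatrix ℝ) Ldag)
    (hherm : (resLap Ldag).IsHermitian) :
    ∃ i : Fin n, 2 ≤ hherm.eigenvalues i := by
  classical
  have hn0 : (0:ℝ) < n := by exact_mod_cast (by omega : 0 < n)
  set L := G.lapMatrix ℝ with hL
  have hLsym : Lᵀ = L := G.isSymm_lapMatrix ℝ
  have hDsym : Ldagᵀ = Ldag := aux_mp_symm hLsym hpen
  have hDsym' : ∀ i j, Ldag i j = Ldag j i := by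
    intro i j
    have := congrFun (congrFun hDsym j) i
    simpa [Matrix.transpose_apply] using this
  obtain ⟨h1, h2, h3, h4⟩ := hpen
  -- quadratic form of the Laplacian is nonnegative
  have hLpos : ∀ x : Fin n → ℝ, 0 ≤ x ⬝ᵥ (L *ᵥ x) := by
    intro x
    simpa using (SimpleGraph.posSemidef_lapMatrix ℝ G).dotProduct_mulVec_nonneg x
  -- Ldag is positive semidefinite
  have hDherm : Ldag.IsHermitian := by
    rw [Matrix.IsHermitian, Matrix.conjTranspose_eq_transpose_of_trivial, hDsym]
  have hDpos : Ldag.PosSemidef := by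
    refine Matrix.PosSemidef.of_dotProduct_mulVec_nonneg hDherm (fun x => ?_)
    have e1 : Ldag *ᵥ x = Ldag *ᵥ ((L * Ldag) *ᵥ x) := by
      rw [Matrix.mulVec_mulVec, ← Matrix.mul_assoc, h2]
    calc (0:ℝ) ≤ (Ldag *ᵥ x) ⬝ᵥ (L *ᵥ (Ldag *ᵥ x)) := hLpos _
      _ = x ⬝ᵥ (Ldag *ᵥ (L *ᵥ (Ldag *ᵥ x))) := (aux_dot_symm Ldag hDsym x _).symm
      _ = star x ⬝ᵥ (Ldag *ᵥ x) := by
          rw [Matrix.mulVec_mulVec, Matrix.mulVec_mulVec, star_trivial, e1,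
            Matrix.mulVec_mulVec, ← Matrix.mul_assoc]
  obtain ⟨Bm, hBm⟩ := aux_psd_eq_star_mul_self hDpos
  rw [Matrix.star_eq_conjTranspose, Matrix.conjTranspose_eq_transpose_of_trivial] at hBm
  have hquad : ∀ y z : Fin n → ℝ, y ⬝ᵥ (Ldag *ᵥ z) = (Bm *ᵥ y) ⬝ᵥ (Bm *ᵥ z) := by
    intro y z
    rw [hBm, ← Matrix.mulVec_mulVec, Matrix.dotProduct_mulVec y, Matrix.vecMul_transpose]
  -- kernel of L consists of constant vectors
  have hker : ∀ x : Fin n → ℝ, L *ᵥ x = 0 → ∀ i j, x i = x j := by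
    intro x hx i j
    refine (G.lapMatrix_mulVec_eq_zero_iff_forall_reachable (x := x)).mp ?_ i j
      (hG.preconnected i j)
    exact hx
  -- column sums of Ldag * L vanish
  have hones : L *ᵥ (fun _ => (1:ℝ)) = 0 := G.lapMatrix_mulVec_const_eq_zero
  have h1sum : ∀ y : Fin n → ℝ, (∑ i, ((Ldag * L) *ᵥ y) i) = 0 := by
    intro y
    have : (fun _ => (1:ℝ)) ⬝ᵥ ((Ldag * L) *ᵥ y) = 0 := by
      rw [aux_dot_symm (Ldag * L) h4 _ y, ← Matrix.mulVec_mulVec, hones,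
        Matrix.mulVec_zero, zero_dotProduct]
    simpa [dotProduct] using this
  -- Ldag * L fixes vectors orthogonal to constants
  have hfix : ∀ x : Fin n → ℝ, (∑ i, x i) = 0 → (Ldag * L) *ᵥ x = x := by
    intro x hx
    set y : Fin n → ℝ := x - (Ldag * L) *ᵥ x with hy
    have hy0 : L *ᵥ y = 0 := by
      rw [hy, Matrix.mulVec_sub, Matrix.mulVec_mulVec, ← Matrix.mul_assoc, h1, sub_self]
    have hconst := hker y hy0
    have hysum : ∑ i, y i = 0 := by
      simp [hy, Finset.sum_sub_distrib, hx, h1sum x]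
    have hyzero : ∀ i, y i = 0 := by
      intro i
      have hs : ∑ j, y j = (n : ℝ) * y i := by
        rw [Finset.sum_congr rfl (fun j _ => hconst j i)]
        simp [Finset.card_univ, mul_comm]
      have := hysum
      rw [hs] at this
      have := mul_eq_zero.mp this
      rcases this with h | h
      · exact absurd h (by positivity)
      · exact h
    have : y = 0 := funext hyzero
    rw [hy] at this
    have := sub_eq_zero.mp this
    exact this.symm
  -- the key resistance bound : r(u,v) ≥ 2/n
  have hres : ∀ u v : Fin n, u ≠ v → 2 / n ≤ resDist Ldag u v := by
    intro u v huv
    set x : Fin n → ℝ := Pi.single u 1 - Pi.single v 1 with hx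
    have hx_sum : ∑ i, x i = 0 := by
      simp [hx, Finset.sum_sub_distrib, Pi.single_apply]
    have hxx : x ⬝ᵥ x = 2 := by
      simp [hx, dotProduct, Pi.single_apply, sub_mul, mul_sub, Finset.sum_sub_distrib,
        Finset.sum_ite_eq, Finset.sum_ite_eq', huv, huv.symm]
      norm_num
    have hrx : x ⬝ᵥ (Ldag *ᵥ x) = resDist Ldag u v := by
      simp [hx, dotProduct, Matrix.mulVec, Pi.single_apply, sub_mul, mul_sub,
        Finset.sum_sub_distrib, Finset.sum_ite_eq, Finset.sum_ite_eq', resDist]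
      rw [hDsym' v u]
      ring
    -- x^T L x ≤ 2n
    have hLx : x ⬝ᵥ (L *ᵥ x) ≤ 2 * n := by
      have hxu : x u = 1 := by simp [hx, Pi.single_apply, huv.symm]
      have hxv : x v = -1 := by simp [hx, Pi.single_apply, huv]
      have hdot : x ⬝ᵥ (L *ᵥ x) = (L *ᵥ x) u - (L *ᵥ x) v := by
        simp [hx, dotProduct, Pi.single_apply, sub_mul,
          Finset.sum_sub_distrib, Finset.sum_ite_eq, Finset.sum_ite_eq']
      have hnb : ∀ w : Fin n, ∑ y ∈ G.neighborFinset w, x y =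
          (if G.Adj w v then (-1:ℝ) else 0) + (if G.Adj w u then (1:ℝ) else 0) := by
        intro w
        simp [hx, Pi.single_apply, Finset.sum_sub_distrib, Finset.sum_ite_eq', sub_eq_neg_add,
          Finset.sum_add_distrib]
        split <;> norm_num
      have hdeg : ∀ w : Fin n, (G.degree w : ℝ) ≤ (n : ℝ) - 1 := by
        intro w
        have hd1 : G.degree w ≤ n - 1 :=
          Nat.le_pred_of_lt (by simpa using G.degree_lt_card_verts w)
        have hd2 : ((n - 1 : ℕ) : ℝ) = (n : ℝ) - 1 := by
          rw [Nat.cast_sub (by omega)]; norm_num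
        calc (G.degree w : ℝ) ≤ ((n-1 : ℕ) : ℝ) := by exact_mod_cast hd1
          _ = (n : ℝ) - 1 := hd2
      rw [hdot, hL, SimpleGraph.lapMatrix_mulVec_apply, SimpleGraph.lapMatrix_mulVec_apply,
        hnb, hnb, hxu, hxv]
      have hdu := hdeg u
      have hdv := hdeg v
      have b1 : (-1:ℝ) ≤ (if G.Adj u v then (-1:ℝ) else 0) ∧
          (if G.Adj u v then (-1:ℝ) else 0) ≤ 0 := by constructor <;> split <;> norm_num
      have b2 : (0:ℝ) ≤ (if G.Adj u u then (1:ℝ) else 0) ∧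
          (if G.Adj u u then (1:ℝ) else 0) ≤ 1 := by constructor <;> split <;> norm_num
      have b3 : (-1:ℝ) ≤ (if G.Adj v v then (-1:ℝ) else 0) ∧
          (if G.Adj v v then (-1:ℝ) else 0) ≤ 0 := by constructor <;> split <;> norm_num
      have b4 : (0:ℝ) ≤ (if G.Adj v u then (1:ℝ) else 0) ∧
          (if G.Adj v u then (1:ℝ) else 0) ≤ 1 := by constructor <;> split <;> norm_num
      obtain ⟨b1a, b1b⟩ := b1; obtain ⟨b2a, b2b⟩ := b2
      obtain ⟨b3a, b3b⟩ := b3; obtain ⟨b4a, b4b⟩ := b4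
      linarith
    -- Cauchy-Schwarz setup
    set a : Fin n → ℝ := Bm *ᵥ x with ha
    set b : Fin n → ℝ := Bm *ᵥ (L *ᵥ x) with hb
    have hab : a ⬝ᵥ b = 2 := by
      rw [ha, hb, ← hquad x (L *ᵥ x), Matrix.mulVec_mulVec, hfix x hx_sum, hxx]
    have haa : a ⬝ᵥ a = resDist Ldag u v := by
      rw [ha, ← hquad x x, hrx]
    have hbb : b ⬝ᵥ b = x ⬝ᵥ (L *ᵥ x) := by
      rw [hb, ← hquad (L *ᵥ x) (L *ᵥ x), ← aux_dot_symm L hLsym x (Ldag *ᵥ (L *ᵥ x)),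
        Matrix.mulVec_mulVec, Matrix.mulVec_mulVec, h1]
    have hcs : (a ⬝ᵥ b)^2 ≤ (a ⬝ᵥ a) * (b ⬝ᵥ b) := by
      simpa [dotProduct, pow_two, Finset.mul_sum, Finset.sum_mul, mul_pow]
        using Finset.sum_mul_sq_le_sq_mul_sq Finset.univ a b
    have haa0 : 0 ≤ a ⬝ᵥ a := Finset.sum_nonneg fun i _ => mul_self_nonneg _
    rw [hab, haa, hbb] at hcs
    rw [haa] at haa0
    rw [div_le_iff₀ hn0]
    nlinarith [hcs, hLx, haa0]
  -- trace of the resistance Laplacian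
  have hdiag0 : ∀ v : Fin n, resDist Ldag v v = 0 := by
    intro v; simp [resDist]; ring
  have htr : (resLap Ldag).trace = ∑ v, resTrans Ldag v := by
    simp [Matrix.trace, Matrix.diag, resLap, Matrix.sub_apply, resMatrix, Matrix.of_apply,
      Matrix.diagonal_apply_eq]
  have htr_ge : 2 * ((n : ℝ) - 1) ≤ ∑ v, resTrans Ldag v := by
    have hv : ∀ v : Fin n, 2 - 2/(n:ℝ) ≤ resTrans Ldag v := by
      intro v
      have hstep : ∑ u, (if u = v then (0:ℝ) else 2/n) ≤ resTrans Ldag v := by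
        apply Finset.sum_le_sum
        intro u _
        by_cases h : u = v
        · simp [h, hdiag0 v]
        · simp only [h, if_false]
          exact hres u v h
      have hcomp : ∑ u, (if u = v then (0:ℝ) else 2/n) = 2 - 2/(n:ℝ) := by
        have : ∀ u : Fin n, (if u = v then (0:ℝ) else 2/n) =
            2/(n:ℝ) - (if u = v then 2/(n:ℝ) else 0) := by
          intro u; by_cases h : u = v <;> simp [h]
        rw [Finset.sum_congr rfl (fun u _ => this u), Finset.sum_sub_distrib]
        simp [Finset.sum_ite_eq', Finset.card_univ]
        field_simp
      linarith [hstep, hcomp.symm.le.trans hstep]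
    calc 2 * ((n : ℝ) - 1) = (n : ℝ) * (2 - 2/(n:ℝ)) := by field_simp
      _ ≤ ∑ v, resTrans Ldag v := by
          have := Finset.sum_le_sum (fun v (_ : v ∈ Finset.univ) => hv v)
          simp [Finset.sum_const, Finset.card_univ, nsmul_eq_mul] at this
          rw [mul_sub]; linarith
  -- resLap kills the constant vector
  have hmv0 : resLap Ldag *ᵥ (fun _ => (1:ℝ)) = 0 := by
    funext i
    have hsymRD : ∀ j, resDist Ldag i j = resDist Ldag j i := by
      intro j; simp [resDist, hDsym' i j]; ring
    have hrow : ∑ j, resMatrix Ldag i j = resTrans Ldag i := by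
      have : ∀ j, resMatrix Ldag i j = resDist Ldag j i := by
        intro j
        by_cases h : i = j
        · simp [resMatrix, h, hdiag0 j]
        · simp [resMatrix, h, hsymRD j]
      rw [Finset.sum_congr rfl (fun j _ => this j)]
      rfl
    simp only [Matrix.mulVec, dotProduct, resLap, Matrix.sub_apply, mul_one,
      Finset.sum_sub_distrib, Pi.zero_apply]
    rw [hrow]
    simp [Matrix.diagonal, Finset.sum_ite_eq]
  -- determinant vanishes, so some eigenvalue is zero
  have hdet : (resLap Ldag).det = 0 := by
    rw [← Matrix.exists_mulVec_eq_zero_iff]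
    refine ⟨fun _ => (1:ℝ), ?_, hmv0⟩
    intro h
    have := congrFun h ⟨0, by omega⟩
    simpa using this
  have hprod : ∏ i, hherm.eigenvalues i = 0 := by
    have := hherm.det_eq_prod_eigenvalues
    rw [hdet] at this
    exact_mod_cast this.symm
  obtain ⟨i0, _, hi0⟩ := Finset.prod_eq_zero_iff.mp hprod
  -- sum of eigenvalues equals the trace
  have hsum : ∑ i, hherm.eigenvalues i = (resLap Ldag).trace :=
    (aux_trace_eq_sum_eigenvalues hherm).symm
  -- take the maximal eigenvalue
  obtain ⟨imax, -, hmax⟩ := Finset.exists_max_image Finset.univ hherm.eigenvalues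
    ⟨i0, Finset.mem_univ i0⟩
  refine ⟨imax, ?_⟩
  have hsplit : ∑ i, hherm.eigenvalues i =
      hherm.eigenvalues i0 + ∑ i ∈ Finset.univ.erase i0, hherm.eigenvalues i :=
    (Finset.add_sum_erase Finset.univ hherm.eigenvalues (Finset.mem_univ i0)).symm
  have hbound : ∑ i ∈ Finset.univ.erase i0, hherm.eigenvalues i ≤
      ((n - 1 : ℕ) : ℝ) * hherm.eigenvalues imax := by
    have hcard : (Finset.univ.erase i0).card = n - 1 := by
      rw [Finset.card_erase_of_mem (Finset.mem_univ i0), Finset.card_univ, Fintype.card_fin]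
    have := Finset.sum_le_card_nsmul (Finset.univ.erase i0) hherm.eigenvalues
      (hherm.eigenvalues imax) (fun x _ => hmax x (Finset.mem_univ x))
    rw [hcard, nsmul_eq_mul] at this
    exact this
  have hcast : ((n - 1 : ℕ) : ℝ) = (n : ℝ) - 1 := by
    rw [Nat.cast_sub (by omega)]; norm_num
  rw [hcast] at hbound
  have hfin : 2 * ((n:ℝ) - 1) ≤ ((n:ℝ) - 1) * hherm.eigenvalues imax := by
    calc 2 * ((n:ℝ) - 1) ≤ ∑ v, resTrans Ldag v := htr_ge
      _ = (resLap Ldag).trace := htr.symm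
      _ = ∑ i, hherm.eigenvalues i := hsum.symm
      _ = hherm.eigenvalues i0 + ∑ i ∈ Finset.univ.erase i0, hherm.eigenvalues i := hsplit
      _ ≤ ((n:ℝ) - 1) * hherm.eigenvalues imax := by rw [hi0]; linarith [hbound]
  have hn1 : (0:ℝ) < (n:ℝ) - 1 := by
    have : (2:ℝ) ≤ n := by exact_mod_cast hn
    linarith
  nlinarith [hfin, hn1]
end

section
/- Let G be a connected graph on n vertices. Then LE_R(G) ≤ (1/n) Σ_{i=1}^n RTr(i) + √((n−1)·[2F − ((1/n) Σ_{i=1}^n RTr(i))²]), where f = Σ_{1≤i<j≤n} r(i,j)² and F = f + (1/2) Σ_{i=1}^n (RTr(i) − (1/n) Σ_{j=1}^n RTr(j))². -/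
open Matrix Polynomial BigOperators

/-! ### Auxiliary lemmas -/

section Aux

lemma mp_symm_s19 {m : Type*} [Fintype m] [DecidableEq m] {A B : Matrix m m ℝ}
    (hA : Aᵀ = A) (h : IsMoorePenroseInv A B) : Bᵀ = B := by
  obtain ⟨h1, h2, h3, h4⟩ := h
  have c1 : A * Bᵀ * A = A := by
    have : (A * B * A)ᵀ = Aᵀ := congrArg Matrix.transpose h1
    simp only [transpose_mul, hA] at this
    rw [← Matrix.mul_assoc] at this
    exact this
  have c2 : Bᵀ * A * Bᵀ = Bᵀ := by
    have : (B * A * B)ᵀ = Bᵀ := congrArg Matrix.transpose h2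
    simp only [transpose_mul, hA] at this
    rw [← Matrix.mul_assoc] at this
    exact this
  have c3 : A * Bᵀ = B * A := by
    conv_lhs => rw [← hA]
    rw [← transpose_mul, h4]
  have c4 : Bᵀ * A = A * B := by
    conv_lhs => rw [← hA]
    rw [← transpose_mul, h3]
  have c3s : (A * Bᵀ)ᵀ = A * Bᵀ := by rw [c3]; exact h4
  have c4s : (Bᵀ * A)ᵀ = Bᵀ * A := by rw [c4]; exact h3
  have e1 : A * B = A * Bᵀ := by
    calc A * B = (A * Bᵀ * A) * B := by rw [c1]
    _ = (A * Bᵀ) * (A * B) := by noncomm_ring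
    _ = (A * Bᵀ)ᵀ * (A * B)ᵀ := by rw [c3s, h3]
    _ = ((A * B) * (A * Bᵀ))ᵀ := (transpose_mul _ _).symm
    _ = ((A * B * A) * Bᵀ)ᵀ := by noncomm_ring
    _ = (A * Bᵀ)ᵀ := by rw [h1]
    _ = A * Bᵀ := c3s
  have e2 : B * A = Bᵀ * A := by
    calc B * A = B * (A * Bᵀ * A) := by rw [c1]
    _ = (B * A) * (Bᵀ * A) := by noncomm_ring
    _ = (B * A)ᵀ * (Bᵀ * A)ᵀ := by rw [h4, c4s]
    _ = ((Bᵀ * A) * (B * A))ᵀ := (transpose_mul _ _).symm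
    _ = (Bᵀ * (A * B * A))ᵀ := by noncomm_ring
    _ = (Bᵀ * A)ᵀ := by rw [h1]
    _ = Bᵀ * A := c4s
  symm
  calc B = B * A * B := h2.symm
  _ = B * (A * Bᵀ) := by rw [Matrix.mul_assoc, e1]
  _ = (Bᵀ * A) * Bᵀ := by rw [← Matrix.mul_assoc, e2]
  _ = Bᵀ := c2

variable {m : Type*} [Fintype m] [DecidableEq m] {B : Matrix m m ℝ}

omit [Fintype m] [DecidableEq m] in
lemma entry_symm (hB : Bᵀ = B) (i j : m) : B i j = B j i :=
  congrFun (congrFun hB j) i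

omit [Fintype m] [DecidableEq m] in
lemma resDist_symm (hB : Bᵀ = B) (i j : m) : resDist B i j = resDist B j i := by
  unfold resDist; rw [entry_symm hB i j]; ring

omit [Fintype m] [DecidableEq m] in
lemma resDist_self (i : m) : resDist B i i = 0 := by simp [resDist]; ring

lemma resDist_nonneg (hB : Bᵀ = B) (hpsd : B.PosSemidef) (i j : m) :
    0 ≤ resDist B i j := by
  have h := hpsd.dotProduct_mulVec_nonneg (Pi.single i (1:ℝ) - Pi.single j 1)
  simp only [star_trivial, Matrix.mulVec_sub, dotProduct_sub,
    sub_dotProduct, Matrix.mulVec_single, single_dotProduct,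
    dotProduct_single, mul_one, one_mul, Pi.smul_apply, op_smul_eq_mul, Matrix.col_apply] at h
  simp only [resDist, entry_symm hB i j] at *
  linarith

lemma resLap_herm (hB : Bᵀ = B) : (resLap B).IsHermitian := by
  rw [Matrix.IsHermitian, conjTranspose_eq_transpose_of_trivial]
  ext i j
  rcases eq_or_ne i j with rfl | hij
  · simp [resLap, resMatrix]
  · simp [resLap, resMatrix, Matrix.diagonal, hij, Ne.symm hij, resDist_symm hB]

lemma resLap_mulVec_one (hB : Bᵀ = B) : (resLap B) *ᵥ (fun _ => (1:ℝ)) = 0 := by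
  funext i
  have h2 : ∑ j, resMatrix B i j = resTrans B i := by
    rw [resTrans]
    apply Finset.sum_congr rfl
    intro j _
    rcases eq_or_ne i j with rfl | hij
    · simp [resMatrix, resDist_self]
    · simp only [resMatrix, Matrix.of_apply, hij, if_false]
      exact resDist_symm hB i j
  simp only [resLap, Matrix.mulVec, dotProduct, mul_one, Pi.zero_apply,
    Matrix.sub_apply]
  rw [Finset.sum_sub_distrib, h2]
  simp [Matrix.diagonal_apply]

lemma charpoly_conj_unitary (U A : Matrix m m ℝ) (hU : U * Uᵀ = 1) (hU2 : Uᵀ * U = 1) :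
    (U * A * Uᵀ).charpoly = A.charpoly := by
  let φ : Matrix m m ℝ →+* Matrix m m ℝ[X] := (C : ℝ →+* ℝ[X]).mapMatrix
  have hmap : ∀ (P Q : Matrix m m ℝ), φ (P * Q) = φ P * φ Q :=
    fun P Q => map_mul _ _ _
  show (U * A * Uᵀ).charpoly = A.charpoly
  have key : charmatrix (U * A * Uᵀ) = φ U * charmatrix A * φ Uᵀ := by
    rw [charmatrix, charmatrix, Matrix.mul_sub, Matrix.sub_mul]
    congr 1
    · have hc : Commute ((scalar m) (X : ℝ[X])) (φ Uᵀ) :=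
        scalar_commute _ (fun r' => Commute.all _ _) _
      rw [Matrix.mul_assoc, hc.eq, ← Matrix.mul_assoc, ← hmap, hU, _root_.map_one φ,
        Matrix.one_mul]
    · rw [← hmap, ← hmap]
  rw [Matrix.charpoly, key, det_mul, det_mul, Matrix.charpoly, mul_comm, ← mul_assoc,
    ← det_mul, ← hmap, hU2, _root_.map_one φ, det_one, one_mul]

lemma spectral_real (A : Matrix m m ℝ) (hA : A.IsHermitian) :
    A = (hA.eigenvectorUnitary : Matrix m m ℝ) * diagonal hA.eigenvalues *
      (hA.eigenvectorUnitary : Matrix m m ℝ)ᵀ := by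
  have h := hA.spectral_theorem
  have : (RCLike.ofReal ∘ hA.eigenvalues : m → ℝ) = hA.eigenvalues := by
    funext i; simp [RCLike.ofReal]
  rw [this] at h
  convert h using 2
  simp [Unitary.conjStarAlgAut_apply, Matrix.star_eq_conjTranspose]

lemma unitary_real_mul_transpose (A : Matrix m m ℝ) (hA : A.IsHermitian) :
    (hA.eigenvectorUnitary : Matrix m m ℝ) * (hA.eigenvectorUnitary : Matrix m m ℝ)ᵀ = 1 ∧
    (hA.eigenvectorUnitary : Matrix m m ℝ)ᵀ * (hA.eigenvectorUnitary : Matrix m m ℝ) = 1 := by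
  have h1 := hA.eigenvectorUnitary.2
  rw [Matrix.mem_unitaryGroup_iff, ← conjTranspose_eq_transpose_of_trivial] at *
  constructor
  · exact h1
  · rw [conjTranspose_eq_transpose_of_trivial, ← conjTranspose_eq_transpose_of_trivial]
    exact (Matrix.mem_unitaryGroup_iff'.mp hA.eigenvectorUnitary.2)

lemma herm_charpoly {n : ℕ} (A : Matrix (Fin n) (Fin n) ℝ) (hA : A.IsHermitian) :
    A.charpoly = ∏ i, (X - C (hA.eigenvalues i)) := by
  obtain ⟨hU, hU2⟩ := unitary_real_mul_transpose A hA
  conv_lhs => rw [spectral_real A hA]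
  rw [charpoly_conj_unitary _ _ hU hU2]
  rw [Matrix.charpoly_of_upperTriangular _ (Matrix.blockTriangular_diagonal _)]
  simp

lemma herm_trace_sq {n : ℕ} (A : Matrix (Fin n) (Fin n) ℝ) (hA : A.IsHermitian) :
    (A * A).trace = ∑ i, hA.eigenvalues i ^ 2 := by
  obtain ⟨hU, hU2⟩ := unitary_real_mul_transpose A hA
  set U := (hA.eigenvectorUnitary : Matrix (Fin n) (Fin n) ℝ)
  set D := diagonal hA.eigenvalues
  have h : A * A = U * (D * D) * Uᵀ := by
    rw [spectral_real A hA]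
    calc U * D * Uᵀ * (U * D * Uᵀ) = U * D * (Uᵀ * U) * D * Uᵀ := by
          simp only [Matrix.mul_assoc]
    _ = U * (D * D) * Uᵀ := by rw [hU2, Matrix.mul_one]; simp only [Matrix.mul_assoc]
  rw [h, Matrix.trace_mul_cycle, ← Matrix.mul_assoc, hU2, Matrix.one_mul]
  show (D * D).trace = _
  rw [diagonal_mul_diagonal, trace_diagonal]
  simp [sq]

lemma roots_prod_X_sub_C' {n : ℕ} (c : Fin n → ℝ) :
    (∏ i, (X - C (c i))).roots = Finset.univ.val.map c := by
  have hc : (fun i => X - C (c i)) = (fun x : ℝ => X - C x) ∘ c := rfl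
  rw [Finset.prod_eq_multiset_prod, hc, ← Multiset.map_map, roots_multiset_prod_X_sub_C]

lemma multiset_eq_of_prod {n : ℕ} (a b : Fin n → ℝ)
    (h : ∏ i, (X - C (a i)) = ∏ i, (X - C (b i))) :
    Finset.univ.val.map a = Finset.univ.val.map b := by
  have := congrArg Polynomial.roots h
  rwa [roots_prod_X_sub_C', roots_prod_X_sub_C'] at this

lemma sum_comp_eq_of_multiset {n : ℕ} {a b : Fin n → ℝ}
    (h : Finset.univ.val.map a = Finset.univ.val.map b) (g : ℝ → ℝ) :
    ∑ i, g (a i) = ∑ i, g (b i) := by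
  have ha : (fun i => g (a i)) = g ∘ a := rfl
  have hb : (fun i => g (b i)) = g ∘ b := rfl
  rw [Finset.sum_eq_multiset_sum, Finset.sum_eq_multiset_sum, ha, hb,
    ← Multiset.map_map, ← Multiset.map_map, h]

lemma offdiag_double {n : ℕ} (r : Fin n → Fin n → ℝ) (hsym : ∀ i j, r i j = r j i)
    (hdiag : ∀ i, r i i = 0) :
    ∑ i, ∑ j, r i j ^ 2
      = 2 * ∑ e ∈ Finset.univ.filter (fun e : Fin n × Fin n => e.1 < e.2), r e.1 e.2 ^ 2 := by
  rw [← Finset.sum_product', Finset.univ_product_univ]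
  have hsplit : (Finset.univ : Finset (Fin n × Fin n))
      = (Finset.univ.filter (fun e : Fin n × Fin n => e.1 < e.2))
        ∪ (Finset.univ.filter (fun e : Fin n × Fin n => ¬ e.1 < e.2)) := by
    rw [Finset.filter_union_filter_not_eq]
  conv_lhs => rw [hsplit]
  rw [Finset.sum_union (Finset.disjoint_filter_filter_not _ _ _)]
  have h2 : ∑ e ∈ Finset.univ.filter (fun e : Fin n × Fin n => ¬ e.1 < e.2), r e.1 e.2 ^ 2
      = ∑ e ∈ Finset.univ.filter (fun e : Fin n × Fin n => e.1 < e.2), r e.1 e.2 ^ 2 := by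
    rw [← Finset.sum_filter_add_sum_filter_not
      (Finset.univ.filter (fun e : Fin n × Fin n => ¬ e.1 < e.2)) (fun e => e.1 = e.2)]
    have hz : ∑ e ∈ (Finset.univ.filter (fun e : Fin n × Fin n => ¬ e.1 < e.2)).filter
        (fun e => e.1 = e.2), r e.1 e.2 ^ 2 = 0 := by
      apply Finset.sum_eq_zero
      intro e he
      simp only [Finset.mem_filter] at he
      rw [he.2, hdiag]; ring
    rw [hz, zero_add]
    apply Finset.sum_nbij' (fun e => (e.2, e.1)) (fun e => (e.2, e.1))
    · intro e he
      simp only [Finset.mem_filter, Finset.mem_univ, true_and] at he ⊢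
      obtain ⟨hnl, hne⟩ := he
      exact lt_of_le_of_ne (le_of_not_gt hnl) (Ne.symm hne)
    · intro e he
      simp only [Finset.mem_filter, Finset.mem_univ, true_and] at he ⊢
      exact ⟨not_lt_of_gt he, (ne_of_lt he).symm⟩
    · intro e _; rfl
    · intro e _; rfl
    · intro e _; rw [hsym]
  rw [h2]; ring

end Aux

theorem resLapEnergy_upper_bound {n : ℕ} (hn : 0 < n)
    (G : SimpleGraph (Fin n)) [DecidableRel G.Adj] (hG : G.Connected)
    (Ldag : Matrix (Fin n) (Fin n) ℝ)
    (hpen : IsMoorePenroseInv (G.lapMatrix ℝ) Ldag)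
    (γL : Fin n → ℝ) (hchar : (resLap Ldag).charpoly = ∏ i, (X - C (γL i)))
    (f F LE avg : ℝ)
    (havg : avg = (∑ i, resTrans Ldag i) / n)
    (hf : f = ∑ e ∈ Finset.univ.filter (fun e : Fin n × Fin n => e.1 < e.2),
      resDist Ldag e.1 e.2 ^ 2)
    (hF : F = f + (1 / 2) * ∑ i, (resTrans Ldag i - avg) ^ 2)
    (hLE : LE = ∑ i, |γL i - avg|) :
    LE ≤ avg + Real.sqrt ((n - 1) * (2 * F - avg ^ 2)) := by
  have hne : Nonempty (Fin n) := ⟨⟨0, hn⟩⟩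
  have hnR : (0:ℝ) < n := by exact_mod_cast hn
  have hLpsd := SimpleGraph.posSemidef_lapMatrix ℝ G
  have hLsym : (G.lapMatrix ℝ)ᵀ = G.lapMatrix ℝ := by
    rw [← conjTranspose_eq_transpose_of_trivial]; exact hLpsd.1
  have hB : Ldagᵀ = Ldag := mp_symm_s19 hLsym hpen
  have hpsd : Ldag.PosSemidef := by
    have h := hLpsd.conjTranspose_mul_mul_same Ldag
    rwa [conjTranspose_eq_transpose_of_trivial, hB, hpen.2.1] at h
  have hr : ∀ i j, 0 ≤ resDist Ldag i j := resDist_nonneg hB hpsd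
  have ht : ∀ i, 0 ≤ resTrans Ldag i := fun i => Finset.sum_nonneg fun u _ => hr u i
  have havg0 : 0 ≤ avg := by
    rw [havg]
    exact div_nonneg (Finset.sum_nonneg fun i _ => ht i) hnR.le
  set R := resLap Ldag with hR
  have hH : R.IsHermitian := resLap_herm hB
  -- trace identity
  have hdiagR : ∀ i, R i i = resTrans Ldag i := by
    intro i; simp [hR, resLap, resMatrix, Matrix.diagonal]
  have htrace : ∑ i, γL i = ∑ i, resTrans Ldag i := by
    have h1 := Matrix.trace_eq_neg_charpoly_coeff R
    have h2 := Polynomial.prod_X_sub_C_coeff_card_pred Finset.univ γL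
      (by simpa using hn)
    rw [hchar] at h1
    simp only [Finset.card_univ, Fintype.card_fin] at h1 h2
    rw [h2, neg_neg] at h1
    rw [← h1, Matrix.trace]
    exact Finset.sum_congr rfl fun i _ => hdiagR i
  -- determinant is zero, so some eigenvalue is zero
  have hdet : R.det = 0 := by
    apply Matrix.exists_mulVec_eq_zero_iff.mp
    refine ⟨fun _ => 1, ?_, resLap_mulVec_one hB⟩
    intro h
    have := congrFun h ⟨0, hn⟩
    norm_num at this
  obtain ⟨i0, -, hz⟩ : ∃ i0 ∈ Finset.univ, (0:ℝ) - γL i0 = 0 := by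
    apply Finset.prod_eq_zero_iff.mp
    have h2 := Matrix.det_eq_sign_charpoly_coeff R
    rw [hdet, hchar, Polynomial.coeff_zero_eq_eval_zero, Polynomial.eval_prod] at h2
    simp only [Polynomial.eval_sub, Polynomial.eval_X, Polynomial.eval_C] at h2
    rcases mul_eq_zero.mp h2.symm with h | h
    · exact absurd h (pow_ne_zero _ (by norm_num))
    · exact h
  have hi0 : γL i0 = 0 := by linarith
  -- sum of squares of eigenvalues
  have hchar2 : ∏ i, (X - C (γL i)) = ∏ i, (X - C (hH.eigenvalues i)) := by
    rw [← hchar, herm_charpoly R hH]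
  have hmult := multiset_eq_of_prod _ _ hchar2
  have hsq : ∑ i, γL i ^ 2 = ∑ i, resTrans Ldag i ^ 2 + 2 * f := by
    have e1 : ∑ i, γL i ^ 2 = ∑ i, hH.eigenvalues i ^ 2 :=
      sum_comp_eq_of_multiset hmult (fun x => x ^ 2)
    rw [e1, ← herm_trace_sq R hH]
    have etr : (R * R).trace
        = ∑ i, (resTrans Ldag i ^ 2 + ∑ j, resDist Ldag i j ^ 2) := by
      rw [Matrix.trace]
      apply Finset.sum_congr rfl
      intro i _
      rw [Matrix.diag_apply, Matrix.mul_apply]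
      have hentry : ∀ j, R i j * R j i
          = (if i = j then resTrans Ldag i ^ 2 else 0) + resDist Ldag i j ^ 2 := by
        intro j
        rcases eq_or_ne i j with rfl | hij
        · simp [hdiagR, resDist_self, sq]
        · have h1 : R i j = -(resDist Ldag i j) := by
            simp [hR, resLap, resMatrix, Matrix.diagonal_apply, hij]
          have h2 : R j i = -(resDist Ldag j i) := by
            simp [hR, resLap, resMatrix, Matrix.diagonal_apply, Ne.symm hij]
          rw [h1, h2, resDist_symm hB j i]
          simp only [hij, if_false]
          ring
      rw [Finset.sum_congr rfl fun j _ => hentry j, Finset.sum_add_distrib,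
        Finset.sum_ite_eq Finset.univ i (fun _ => resTrans Ldag i ^ 2)]
      simp
    rw [etr, Finset.sum_add_distrib,
      offdiag_double _ (resDist_symm hB) resDist_self, ← hf]
  -- key identity : ∑ (γ - avg)^2 = 2F
  have hsumt : ∑ i, resTrans Ldag i = n * avg := by
    rw [havg]; field_simp
  have expand : ∀ (c : Fin n → ℝ),
      ∑ i, (c i - avg) ^ 2 = ∑ i, c i ^ 2 - 2 * avg * (∑ i, c i) + n * avg ^ 2 := by
    intro c
    have : ∀ i, (c i - avg) ^ 2 = c i ^ 2 - 2 * avg * c i + avg ^ 2 := fun i => by ring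
    rw [Finset.sum_congr rfl fun i _ => this i, Finset.sum_add_distrib,
      Finset.sum_sub_distrib, Finset.sum_const, ← Finset.mul_sum]
    simp only [Finset.card_univ, Fintype.card_fin, nsmul_eq_mul]
  have hkey : ∑ i, (γL i - avg) ^ 2 = 2 * F := by
    rw [expand γL, hsq, htrace, hsumt, hF, expand (resTrans Ldag), hsumt]
    ring
  -- final bound
  set S := Finset.univ.erase i0 with hS
  have hsplitLE : LE = avg + ∑ i ∈ S, |γL i - avg| := by
    rw [hLE, ← Finset.add_sum_erase _ _ (Finset.mem_univ i0), hi0, zero_sub, abs_neg,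
      abs_of_nonneg havg0]
  have hSsum : ∑ i ∈ S, (γL i - avg) ^ 2 = 2 * F - avg ^ 2 := by
    rw [hS, Finset.sum_erase_eq_sub (Finset.mem_univ i0), hkey, hi0]
    ring
  have hScard : (S.card : ℝ) = (n : ℝ) - 1 := by
    rw [hS, Finset.card_erase_of_mem (Finset.mem_univ i0), Finset.card_univ,
      Fintype.card_fin, Nat.cast_sub hn]
    simp
  have hcs : (∑ i ∈ S, |γL i - avg|) ^ 2 ≤ ((n:ℝ) - 1) * (2 * F - avg ^ 2) := by
    have h := sq_sum_le_card_mul_sum_sq (s := S) (f := fun i => |γL i - avg|)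
    simp only [sq_abs] at h
    rw [hSsum] at h
    calc (∑ i ∈ S, |γL i - avg|) ^ 2 ≤ (S.card : ℝ) * (2 * F - avg ^ 2) := h
    _ = ((n:ℝ) - 1) * (2 * F - avg ^ 2) := by rw [hScard]
  have hfinal : ∑ i ∈ S, |γL i - avg| ≤ Real.sqrt (((n:ℝ) - 1) * (2 * F - avg ^ 2)) := by
    have hnonneg : 0 ≤ ∑ i ∈ S, |γL i - avg| :=
      Finset.sum_nonneg fun i _ => abs_nonneg _
    calc ∑ i ∈ S, |γL i - avg| = Real.sqrt ((∑ i ∈ S, |γL i - avg|) ^ 2) := by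
          rw [Real.sqrt_sq hnonneg]
    _ ≤ Real.sqrt (((n:ℝ) - 1) * (2 * F - avg ^ 2)) := Real.sqrt_le_sqrt hcs
  rw [hsplitLE]
  linarith
end
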